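/- If g is a simple Lie algebra, then Der(g) is complete; in particular the derivation tower of g stabilizes after at most one step. -/

import Mathlib

/-- A Lie algebra is complete if its center is zero and every derivation is inner. -/
def IsCompleteLieAlgebra (K : Type*) (M : Type*) [Field K] [LieRing M] [LieAlgebra K M] : Prop :=
  LieAlgebra.center K M = ⊥ ∧
    ∀ D : LieDerivation K M M, ∃ m : M, D = LieDerivation.ad K M m


open LieDerivation

section Aux

variable (K L : Type*) [Field K] [LieRing L] [LieAlgebra K L] [LieAlgebra.IsSimple K L]

lemma aux_perfect : ⁅(⊤ : LieIdeal K L), (⊤ : LieIdeal K L)⁆ = ⊤ := by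
  refine lie_eq_self_of_isAtom_of_nonabelian ⊤ (LieAlgebra.IsSimple.isAtom_top K L) ?_
  rw [lie_abelian_iff_equiv_lie_abelian LieIdeal.topEquiv]
  exact LieAlgebra.IsSimple.non_abelian K

variable {K L} in
lemma aux_mem_range
    (Δ : LieDerivation K (LieDerivation K L L) (LieDerivation K L L)) (x : L) :
    ∃ y : L, Δ (ad K L x) = ad K L y := by
  have hx : x ∈ (⁅(⊤ : LieIdeal K L), (⊤ : LieIdeal K L)⁆ : LieIdeal K L) := by
    rw [aux_perfect]; trivial
  rw [← LieSubmodule.mem_toSubmodule, LieSubmodule.lieIdeal_oper_eq_linear_span] at hx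
  refine Submodule.span_induction ?_ ?_ ?_ ?_ hx
  · rintro _ ⟨a, b, rfl⟩
    refine ⟨Δ (ad K L a) b - Δ (ad K L b) a, ?_⟩
    have h1 : ad K L (⁅(a : L), (b : L)⁆) = ⁅ad K L a, ad K L b⁆ := by
      simp [LieHom.map_lie]
    rw [h1, apply_lie_eq_sub, map_sub,
        ← lie_der_ad_eq_ad_der (Δ (ad K L a)) (b : L),
        ← lie_der_ad_eq_ad_der (Δ (ad K L b)) (a : L),
        ← lie_skew (ad K L (a : L)) (Δ (ad K L b)),
        ← lie_skew (ad K L (b : L)) (Δ (ad K L a))]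
    abel
  · exact ⟨0, by simp⟩
  · rintro x y - - ⟨u, hu⟩ ⟨v, hv⟩
    exact ⟨u + v, by simp [map_add, hu, hv]⟩
  · rintro c x - ⟨u, hu⟩
    exact ⟨c • u, by simp [map_smul, hu]⟩

end Aux

/-- If `g` is a simple Lie algebra, then `Der(g)` is complete; in particular every
derivation of `Der(g)` is inner, so the derivation tower stabilizes after at most one
step. -/
theorem lieDerivation_of_simple_isComplete (K : Type*) (L : Type*) [Field K] [LieRing L]
    [LieAlgebra K L] [LieAlgebra.IsSimple K L] :
    IsCompleteLieAlgebra K (LieDerivation K L L) := by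
  have hc : LieAlgebra.center K L = ⊥ := LieAlgebra.center_eq_bot K L
  have hinj : Function.Injective (ad K L) := injective_ad_of_center_eq_bot hc
  constructor
  · -- the center of `Der(L)` is trivial
    rw [eq_bot_iff]
    intro D hD
    rw [LieSubmodule.mem_bot]
    have hD' : ∀ E : LieDerivation K L L, ⁅E, D⁆ = 0 :=
      fun E => (LieModule.mem_maxTrivSubmodule K _ _ D).mp hD E
    ext x
    have h0 : ad K L (D x) = ad K L 0 := by
      rw [map_zero, ← lie_der_ad_eq_ad_der D x, ← lie_skew, hD', neg_zero]
    simpa using hinj h0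
  · intro Δ
    choose δ hδ using aux_mem_range Δ
    have hadd : ∀ x y, δ (x + y) = δ x + δ y := by
      intro x y
      apply hinj
      rw [map_add, ← hδ, ← hδ, ← hδ, map_add, map_add]
    have hsmul : ∀ (c : K) (x : L), δ (c • x) = c • δ x := by
      intro c x
      apply hinj
      rw [map_smul, ← hδ, ← hδ, map_smul, map_smul]
    have hleib : ∀ a b : L, δ ⁅a, b⁆ = ⁅a, δ b⁆ - ⁅b, δ a⁆ := by
      intro a b
      apply hinj
      rw [map_sub, LieHom.map_lie, LieHom.map_lie, ← hδ, ← hδ, ← hδ, LieHom.map_lie,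
        apply_lie_eq_sub, hδ, hδ, lie_der_ad_eq_ad_der (ad K L a) (δ b),
        lie_der_ad_eq_ad_der (ad K L b) (δ a)]
    let D₀ : LieDerivation K L L :=
      ⟨{ toFun := δ, map_add' := hadd, map_smul' := hsmul }, hleib⟩
    have key : ∀ (E : LieDerivation K L L) (x : L), (Δ E) x = δ (E x) - E (δ x) := by
      intro E x
      apply hinj
      have h1 : ad K L ((Δ E) x) = Δ ⁅E, ad K L x⁆ - ⁅E, Δ (ad K L x)⁆ := by
        rw [apply_lie_eq_sub, ← lie_skew (ad K L x) (Δ E), ← lie_der_ad_eq_ad_der (Δ E) x]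
        abel
      rw [h1, lie_der_ad_eq_ad_der E x, hδ x, lie_der_ad_eq_ad_der E (δ x), hδ (E x),
        map_sub]
    refine ⟨D₀, ?_⟩
    ext E x
    rw [key E x]
    simp [coe_ad_apply_eq_ad_apply, LieAlgebra.ad_apply, commutator_apply]
    rfl
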